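/- arXiv:1204.2674 — 4 statements merged into one kernel-verified Lean document; each statement's English description precedes it below -/
import Mathlib

section
/- In the free unital associative ring ℤ⟨X⟩ on a countable set X, for all elements a₁,...,a₅, the element [a₁,a₂,a₃][a₄,a₅] + [a₁,a₂,a₄][a₃,a₅] lies in the two-sided ideal T⁽⁴⁾ generated by all left-normed commutators [b₁,b₂,b₃,b₄]. -/
noncomputable section

/-- `ℤ⟨X⟩`, the free unital associative ring on a countable set `X = {x₀, x₁, …}`. -/
abbrev R : Type := FreeAlgebra ℤ ℕ

/-- The commutator `[a,b] = ab - ba`. -/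
def br (a b : R) : R := a * b - b * a

/-- `T⁽⁴⁾`: the two-sided ideal generated by all left-normed commutators of length 4. -/
def T4 : TwoSidedIdeal R := TwoSidedIdeal.span {y | ∃ a b c d : R, y = br (br (br a b) c) d}

lemma mem_T4 (a b c d : R) : br (br (br a b) c) d ∈ T4 :=
  TwoSidedIdeal.subset_span ⟨a, b, c, d, rfl⟩

theorem stmt0 (a₁ a₂ a₃ a₄ a₅ : R) :
    br (br a₁ a₂) a₃ * br a₄ a₅ + br (br a₁ a₂) a₄ * br a₃ a₅ ∈ T4 := by
  have key : br (br a₁ a₂) a₃ * br a₄ a₅ + br (br a₁ a₂) a₄ * br a₃ a₅ =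
      br (br (br a₁ a₂) (a₃ * a₄)) a₅ - br (br (br a₁ a₂) a₃) a₅ * a₄
        - a₃ * br (br (br a₁ a₂) a₄) a₅ + br (br (br a₁ a₂) a₄) (br a₃ a₅) := by
    simp only [br]; noncomm_ring
  rw [key]
  exact T4.add_mem (T4.sub_mem (T4.sub_mem (mem_T4 _ _ _ _)
    (T4.mul_mem_right _ _ (mem_T4 _ _ _ _)))
    (T4.mul_mem_left _ _ (mem_T4 _ _ _ _))) (mem_T4 _ _ _ _)
end
end

section
/- Let w = [x₁·[x₂,x₃,x₄], x₅] in ℤ⟨X⟩. Then w ∈ γ₃, 6w ∈ γ₄, but w ∉ γ₄, where γₙ denotes the n-th term of the lower central series of ℤ⟨X⟩ regarded as a Lie ring under the commutator bracket. -/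
noncomputable section

/-- The free generators. -/
def x (i : ℕ) : R := FreeAlgebra.ι ℤ i

/-- The lower central series of `ℤ⟨X⟩` as a Lie ring: `gamma 0 = γ₁ = ℤ⟨X⟩`,
`gamma n = γ_{n+1} = [γₙ, ℤ⟨X⟩]` (the additive subgroup generated by `[g,a]`, `g ∈ γₙ`). -/
def gamma : ℕ → AddSubgroup R
  | 0 => ⊤
  | n + 1 => AddSubgroup.closure {y | ∃ g ∈ gamma n, ∃ a : R, y = br g a}


/-! ### Auxiliary definitions -/

/-- monomial associated to a word -/
def W (l : List ℕ) : R := (l.map x).prod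

lemma W_append (l₁ l₂ : List ℕ) : W (l₁ ++ l₂) = W l₁ * W l₂ := by
  simp [W, List.map_append]

lemma mem_gamma_succ {n : ℕ} {g : R} (hg : g ∈ gamma n) (a : R) :
    br g a ∈ gamma (n + 1) := by
  rw [gamma]
  exact AddSubgroup.subset_closure ⟨g, hg, a, rfl⟩

lemma mem1 (a b : R) : br a b ∈ gamma 1 :=
  mem_gamma_succ (by simp [gamma]) b

lemma mem2 (a b c : R) : br (br a b) c ∈ gamma 2 :=
  mem_gamma_succ (mem1 a b) c

lemma mem3 (a b c d : R) : br (br (br a b) c) d ∈ gamma 3 :=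
  mem_gamma_succ (mem2 a b c) d

lemma part1 : br (x 1 * br (br (x 2) (x 3)) (x 4)) (x 5) ∈ gamma 2 := by
  have h : br (x 1 * br (br (x 2) (x 3)) (x 4)) (x 5) =
      ((1 : ℤ) • (br (br (W [1]) (W [2,3])) (W [4,5]))) + ((-1 : ℤ) • (br (br (W [1,2]) (W [3,5])) (W [4]))) + ((1 : ℤ) • (br (br (W [1,2,3]) (W [5])) (W [4]))) + ((-1 : ℤ) • (br (br (W [1]) (W [2])) (W [4,3,5]))) + ((1 : ℤ) • (br (br (W [1]) (W [2,4])) (W [3,5]))) + ((-1 : ℤ) • (br (br (W [1,3]) (W [2])) (W [4,5]))) + ((-1 : ℤ) • (br (br (W [1]) (W [3])) (W [4,5,2]))) + ((1 : ℤ) • (br (br (W [1,3]) (W [4,5])) (W [2]))) + ((1 : ℤ) • (br (br (W [1]) (W [3,5,2])) (W [4]))) + ((-1 : ℤ) • (br (br (W [1,3]) (W [5])) (W [2,4]))) + ((-1 : ℤ) • (br (br (W [1,4]) (W [2,3])) (W [5]))) + ((1 : ℤ) • (br (br (W [1,4,3]) (W [2])) (W [5]))) + ((-1 : ℤ) • (br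 (br (W [1]) (W [4])) (W [3,5,2]))) + ((1 : ℤ) • (br (br (W [1,4]) (W [3])) (W [5,2]))) := by
    simp only [br, W, List.map, List.prod_cons, List.prod_nil, x]
    noncomm_ring
  rw [h]
  repeat
    first
    | exact AddSubgroup.zsmul_mem _ (mem2 _ _ _) _
    | apply AddSubgroup.add_mem

lemma part2 : (6 : ℤ) • br (x 1 * br (br (x 2) (x 3)) (x 4)) (x 5) ∈ gamma 3 := by
  have h : (6 : ℤ) • br (x 1 * br (br (x 2) (x 3)) (x 4)) (x 5) =
      ((-2 : ℤ) • (br (br (br (W [1]) (W [2])) (W [3,4])) (W [5]))) + ((4 : ℤ) • (br (br (br (W [1]) (W [2,3])) (W [4])) (W [5]))) + ((4 : ℤ) • (br (br (br (W [1,2]) (W [3])) (W [4])) (W [5]))) + ((8 : ℤ) • (br (br (br (W [1]) (W [2])) (W [3])) (W [5,4]))) + ((-8 : ℤ) • (br (br (br (W [1]) (W [2,3])) (W [5])) (W [4]))) + ((2 : ℤ) • (br (br (br (W [1]) (W [2])) (W [4])) (W [3,5]))) + ((-4 : ℤ) • (br (br (br (W [1]) (W [2,4])) (W [3])) (W [5])))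 + ((2 : ℤ) • (br (br (br (W [1,2]) (W [4])) (W [3])) (W [5]))) + ((4 : ℤ) • (br (br (br (W [1]) (W [2])) (W [4])) (W [5,3]))) + ((-4 : ℤ) • (br (br (br (W [1]) (W [2])) (W [4,5])) (W [3]))) + ((4 : ℤ) • (br (br (br (W [1]) (W [2])) (W [5])) (W [3,4]))) + ((-4 : ℤ) • (br (br (br (W [1]) (W [2,5])) (W [3])) (W [4]))) + ((8 : ℤ) • (br (br (br (W [1]) (W [3])) (W [2])) (W [4,5]))) + ((-6 : ℤ) • (br (br (br (W [1]) (W [3])) (W [2,4])) (W [5]))) + ((-8 : ℤ) • (br (br (br (W [1]) (W [3,2])) (W [4])) (W [5]))) + ((-4 : ℤ) • (br (br (br (W [1]) (W [3])) (W [2])) (W [5,4]))) + ((4 : ℤ) • (br (br (br (W [1,3]) (W [2])) (W [5])) (W [4]))) + ((2 : ℤ) • (br (br (br (W [1]) (W [3,4])) (W [2])) (W [5]))) + ((-2 : ℤ) • (br (br (br (W [1,3]) (W [4])) (W [2])) (W [5]))) + ((6 : ℤ) • (br (br (br (W [1]) (W [3])) (W [4])) (W [5,2]))) + ((-8 : ℤ)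 • (br (br (br (W [1]) (W [3])) (W [4,5])) (W [2]))) + ((2 : ℤ) • (br (br (br (W [1,3]) (W [4])) (W [5])) (W [2]))) + ((8 : ℤ) • (br (br (br (W [1]) (W [3])) (W [5])) (W [2,4]))) + ((-4 : ℤ) • (br (br (br (W [1]) (W [3,5])) (W [2])) (W [4]))) + ((-4 : ℤ) • (br (br (br (W [1,3]) (W [5])) (W [2])) (W [4]))) + ((2 : ℤ) • (br (br (br (W [1]) (W [3,5])) (W [4])) (W [2]))) + ((-2 : ℤ) • (br (br (br (W [1,3]) (W [5])) (W [4])) (W [2]))) + ((-4 : ℤ) • (br (br (br (W [1]) (W [4])) (W [2,3])) (W [5]))) + ((-2 : ℤ) • (br (br (br (W [1]) (W [4,2])) (W [3])) (W [5]))) + ((-2 : ℤ) • (br (br (br (W [1]) (W [4])) (W [2])) (W [5,3]))) + ((2 : ℤ) • (br (br (br (W [1]) (W [4])) (W [2,5])) (W [3]))) + ((-2 : ℤ) • (br (br (br (W [1]) (W [4,2])) (W [5])) (W [3]))) + ((2 : ℤ) • (br (br (br (W [1,4]) (W [2])) (W [5])) (W [3]))) + ((6 : ℤ) • (br (br (br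 (W [1]) (W [4])) (W [3,2])) (W [5]))) + ((2 : ℤ) • (br (br (br (W [1]) (W [4])) (W [3])) (W [5,2]))) + ((-2 : ℤ) • (br (br (br (W [1]) (W [4])) (W [3,5])) (W [2]))) + ((2 : ℤ) • (br (br (br (W [1]) (W [4])) (W [5])) (W [2,3]))) + ((-2 : ℤ) • (br (br (br (W [1,4]) (W [5])) (W [2])) (W [3]))) + ((-2 : ℤ) • (br (br (br (W [1]) (W [4])) (W [5])) (W [3,2]))) + ((2 : ℤ) • (br (br (br (W [1,4]) (W [5])) (W [3])) (W [2]))) + ((4 : ℤ) • (br (br (br (W [1]) (W [5])) (W [2,3])) (W [4]))) + ((-4 : ℤ) • (br (br (br (W [1,5]) (W [2])) (W [3])) (W [4]))) + ((2 : ℤ) • (br (br (br (W [1]) (W [5])) (W [2])) (W [4,3]))) + ((-2 : ℤ) • (br (br (br (W [1,5]) (W [2])) (W [4])) (W [3]))) + ((-2 : ℤ) • (br (br (br (W [1]) (W [5])) (W [3])) (W [2,4]))) + ((2 : ℤ) • (br (br (br (W [1]) (W [5])) (W [3,2])) (W [4]))) := by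
    simp only [br, W, List.map, List.prod_cons, List.prod_nil, x, zsmul_eq_mul]
    push_cast
    noncomm_ring
  rw [h]
  repeat
    first
    | exact AddSubgroup.zsmul_mem _ (mem3 _ _ _ _) _
    | apply AddSubgroup.add_mem

/-! ### Part 3: the functional -/

def ctabN : List ℕ → ℕ
  | [1,2,3,4,5] => 2
  | [1,3,2,4,5] => 2
  | [1,3,2,5,4] => 2
  | [1,3,4,5,2] => 2
  | [1,4,2,5,3] => 2
  | [1,4,3,2,5] => 2
  | [1,4,3,5,2] => 2
  | [1,5,2,3,4] => 1
  | [1,5,2,4,3] => 1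
  | [1,5,3,4,2] => 2
  | [1,5,4,2,3] => 2
  | [2,3,1,4,5] => 2
  | [2,3,1,5,4] => 1
  | [2,3,4,1,5] => 2
  | [2,3,5,1,4] => 2
  | [2,3,5,4,1] => 2
  | [2,4,1,3,5] => 2
  | [2,4,1,5,3] => 1
  | [2,4,3,1,5] => 1
  | [2,4,5,1,3] => 2
  | [2,5,1,4,3] => 2
  | [2,5,3,4,1] => 1
  | [2,5,4,1,3] => 1
  | [2,5,4,3,1] => 2
  | [3,1,2,4,5] => 1
  | [3,1,5,2,4] => 1
  | [3,4,1,2,5] => 2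
  | [3,4,5,1,2] => 2
  | [3,5,1,2,4] => 2
  | [3,5,1,4,2] => 1
  | [4,1,2,3,5] => 1
  | [4,1,3,2,5] => 2
  | [4,5,1,2,3] => 1
  | [5,2,3,1,4] => 1
  | _ => 0


/-- coefficient function, supported on permutations of `[1,2,3,4,5]` -/
def cfull (l : List ℕ) : ℕ := if l.Perm [1,2,3,4,5] then ctabN l else 0

def cz (l : List ℕ) : ZMod 3 := ((cfull l : ℕ) : ZMod 3)

def relcN (u v w t : List ℕ) : Prop :=
  (ctabN (u ++ (v ++ (w ++ t))) + ctabN (w ++ (v ++ (u ++ t)))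
   + ctabN (t ++ (v ++ (u ++ w))) + ctabN (t ++ (w ++ (u ++ v)))) % 3
  = (ctabN (v ++ (u ++ (w ++ t))) + ctabN (w ++ (u ++ (v ++ t)))
   + ctabN (t ++ (u ++ (v ++ w))) + ctabN (t ++ (w ++ (v ++ u)))) % 3

instance (u v w t : List ℕ) : Decidable (relcN u v w t) := by unfold relcN; infer_instance

def ins (a : ℕ) : List ℕ → List (List ℕ)
  | [] => [[a]]
  | b :: t => (a :: b :: t) :: (ins a t).map (b :: ·)

def perms : List ℕ → List (List ℕ)
  | [] => [[]]
  | a :: t => (perms t).flatMap (ins a)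

lemma mem_ins (a : ℕ) (u v : List ℕ) : (u ++ a :: v) ∈ ins a (u ++ v) := by
  induction u with
  | nil => cases v <;> simp [ins]
  | cons b u ih =>
      simp only [List.cons_append, ins, List.mem_cons, List.mem_map]
      exact Or.inr ⟨u ++ a :: v, ih, rfl⟩

lemma mem_perms : ∀ {P L : List ℕ}, L.Perm P → L ∈ perms P := by
  intro P
  induction P with
  | nil => intro L h; simp [List.Perm.eq_nil h, perms]
  | cons a t ih =>
      intro L h
      have ha : a ∈ L := h.mem_iff.2 (List.mem_cons_self)
      obtain ⟨u, v, rfl⟩ := List.append_of_mem ha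
      have h2 : (u ++ v).Perm t := (List.perm_middle.symm.trans h).cons_inv
      exact List.mem_flatMap.2 ⟨u ++ v, ih h2, mem_ins a u v⟩

set_option maxRecDepth 100000 in
set_option maxHeartbeats 1000000 in
lemma relAux : ∀ L ∈ perms [1,2,3,4,5],
    ∀ p ∈ [((1:ℕ),(1:ℕ),(1:ℕ)),(1,1,2),(1,2,1),(2,1,1)],
    relcN (L.take p.1) ((L.drop p.1).take p.2.1) (((L.drop p.1).drop p.2.1).take p.2.2)
      (((L.drop p.1).drop p.2.1).drop p.2.2) := by
  decide

/-- the eight rearranged concatenations are pairwise permutations -/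
lemma permAll (u v w t : List ℕ) :
    (v ++ (u ++ (w ++ t))).Perm (u ++ (v ++ (w ++ t))) ∧
    (w ++ (u ++ (v ++ t))).Perm (u ++ (v ++ (w ++ t))) ∧
    (w ++ (v ++ (u ++ t))).Perm (u ++ (v ++ (w ++ t))) ∧
    (t ++ (u ++ (v ++ w))).Perm (u ++ (v ++ (w ++ t))) ∧
    (t ++ (v ++ (u ++ w))).Perm (u ++ (v ++ (w ++ t))) ∧
    (t ++ (w ++ (u ++ v))).Perm (u ++ (v ++ (w ++ t))) ∧
    (t ++ (w ++ (v ++ u))).Perm (u ++ (v ++ (w ++ t))) := by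
  refine ⟨?_, ?_, ?_, ?_, ?_, ?_, ?_⟩ <;>
    · apply List.perm_iff_count.mpr
      intro a
      simp only [List.count_append]
      omega

lemma cRel (u v w t : List ℕ) :
    cz (u ++ (v ++ (w ++ t))) - cz (v ++ (u ++ (w ++ t)))
    - cz (w ++ (u ++ (v ++ t))) + cz (w ++ (v ++ (u ++ t)))
    - cz (t ++ (u ++ (v ++ w))) + cz (t ++ (v ++ (u ++ w)))
    + cz (t ++ (w ++ (u ++ v))) - cz (t ++ (w ++ (v ++ u))) = 0 := by
  obtain ⟨p2, p3, p4, p5, p6, p7, p8⟩ := permAll u v w t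
  rcases eq_or_ne u [] with rfl | hu
  · simp only [List.nil_append, List.append_nil]; ring
  rcases eq_or_ne v [] with rfl | hv
  · simp only [List.nil_append, List.append_nil]; ring
  rcases eq_or_ne w [] with rfl | hw
  · simp only [List.nil_append, List.append_nil]; ring
  rcases eq_or_ne t [] with rfl | ht
  · simp only [List.nil_append, List.append_nil]; ring
  by_cases hperm : (u ++ (v ++ (w ++ t))).Perm [1,2,3,4,5]
  · -- use the decided relations
    have hL : (u ++ (v ++ (w ++ t))) ∈ perms [1,2,3,4,5] := mem_perms hperm
    have hlen : u.length + v.length + w.length + t.length = 5 := by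
      have h5 := hperm.length_eq
      simp only [List.length_append] at h5
      simp at h5
      omega
    have hu1 : 1 ≤ u.length := List.length_pos_iff.mpr hu
    have hv1 : 1 ≤ v.length := List.length_pos_iff.mpr hv
    have hw1 : 1 ≤ w.length := List.length_pos_iff.mpr hw
    have ht1 : 1 ≤ t.length := List.length_pos_iff.mpr ht
    have hmem : (u.length, v.length, w.length) ∈
        [((1:ℕ),(1:ℕ),(1:ℕ)),(1,1,2),(1,2,1),(2,1,1)] := by
      simp only [List.mem_cons, List.mem_singleton, Prod.mk.injEq, List.not_mem_nil, or_false]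
      omega
    have hrel := relAux _ hL _ hmem
    simp only [List.take_left, List.drop_left] at hrel
    unfold relcN at hrel
    have hcast : ∀ l : List ℕ, l.Perm [1,2,3,4,5] → cz l = ((ctabN l : ℕ) : ZMod 3) := by
      intro l hl; simp [cz, cfull, if_pos hl]
    rw [hcast _ hperm, hcast _ (p2.trans hperm), hcast _ (p3.trans hperm),
        hcast _ (p4.trans hperm), hcast _ (p5.trans hperm), hcast _ (p6.trans hperm),
        hcast _ (p7.trans hperm), hcast _ (p8.trans hperm)]
    have h3 : ((ctabN (u ++ (v ++ (w ++ t))) + ctabN (w ++ (v ++ (u ++ t)))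
        + ctabN (t ++ (v ++ (u ++ w))) + ctabN (t ++ (w ++ (u ++ v))) : ℕ) : ZMod 3)
        = ((ctabN (v ++ (u ++ (w ++ t))) + ctabN (w ++ (u ++ (v ++ t)))
        + ctabN (t ++ (u ++ (v ++ w))) + ctabN (t ++ (w ++ (v ++ u))) : ℕ) : ZMod 3) := by
      have := congrArg (fun n : ℕ => (n : ZMod 3)) hrel
      simpa only [ZMod.natCast_mod] using this
    push_cast at h3
    linear_combination h3
  · -- all terms vanish
    have hz : ∀ l : List ℕ, ¬ l.Perm [1,2,3,4,5] → cz l = 0 := by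
      intro l hl; simp [cz, cfull, if_neg hl]
    rw [hz _ hperm, hz _ (fun h => hperm (p2.symm.trans h)),
        hz _ (fun h => hperm (p3.symm.trans h)), hz _ (fun h => hperm (p4.symm.trans h)),
        hz _ (fun h => hperm (p5.symm.trans h)), hz _ (fun h => hperm (p6.symm.trans h)),
        hz _ (fun h => hperm (p7.symm.trans h)), hz _ (fun h => hperm (p8.symm.trans h))]
    ring


/-! ### the linear functional ψ -/

def E := FreeAlgebra.equivMonoidAlgebraFreeMonoid (R := ℤ) (X := ℕ)
def B : Module.Basis (FreeMonoid ℕ) ℤ R := FreeAlgebra.basisFreeMonoid ℤ ℕ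

lemma E_W (l : List ℕ) : E (W l) = MonoidAlgebra.single (FreeMonoid.ofList l) (1 : ℤ) := by
  induction l with
  | nil => simp [W]; exact MonoidAlgebra.one_def
  | cons i t ih =>
      simp only [W, List.map, List.prod_cons, map_mul] at ih ⊢
      rw [ih]
      have hx : E (x i) = MonoidAlgebra.single (FreeMonoid.of i) (1 : ℤ) := by
        simp [E, x, FreeAlgebra.equivMonoidAlgebraFreeMonoid, MonoidAlgebra.of_apply]
      rw [hx, MonoidAlgebra.single_mul_single, one_mul]
      rfl

lemma B_W (l : List ℕ) : B (FreeMonoid.ofList l) = W l := by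
  have h : B (FreeMonoid.ofList l) = E.symm (MonoidAlgebra.single (FreeMonoid.ofList l) 1) := by
    simp [B, E, FreeAlgebra.basisFreeMonoid]
    rfl
  rw [h, ← E_W]
  exact E.symm_apply_apply _

def ψ : R →ₗ[ℤ] ZMod 3 := B.constr ℤ (fun m => cz (FreeMonoid.toList m))

lemma psi_W (l : List ℕ) : ψ (W l) = cz l := by
  rw [← B_W, ψ, Module.Basis.constr_basis]
  simp [FreeMonoid.toList_ofList]

/-! ### linearity lemmas for br -/

lemma br_add_left (a b c : R) : br (a + b) c = br a c + br b c := by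
  simp only [br]; noncomm_ring
lemma br_add_right (a b c : R) : br a (b + c) = br a b + br a c := by
  simp only [br]; noncomm_ring
lemma br_neg_left (a c : R) : br (-a) c = - br a c := by
  simp only [br]; noncomm_ring
lemma br_zero_left (c : R) : br 0 c = 0 := by simp [br]
lemma br_zero_right (c : R) : br c 0 = 0 := by simp [br]
lemma br_smul_left (n : ℤ) (a c : R) : br (n • a) c = n • br a c := by
  simp only [br, zsmul_eq_mul, mul_sub]
  rw [mul_assoc, ← mul_assoc c, ← (Int.cast_commute n c).eq, mul_assoc]
lemma br_smul_right (n : ℤ) (a c : R) : br c (n • a) = n • br c a := by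
  simp only [br, zsmul_eq_mul, mul_sub]
  rw [← mul_assoc c, ← (Int.cast_commute n c).eq, mul_assoc, mul_assoc]

/-! ### spanning -/

lemma span_W : Submodule.span ℤ (Set.range W) = ⊤ := by
  rw [Submodule.eq_top_iff']
  intro a
  induction a using FreeAlgebra.induction with
  | grade0 r =>
      have h1 : (algebraMap ℤ R r) = r • W [] := by
        simp [W, Algebra.algebraMap_eq_smul_one]
      rw [h1]
      exact Submodule.smul_mem _ _ (Submodule.subset_span ⟨[], rfl⟩)
  | grade1 i =>
      have h1 : FreeAlgebra.ι ℤ i = W [i] := by simp [W, x]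
      rw [h1]; exact Submodule.subset_span ⟨[i], rfl⟩
  | mul a b ha hb =>
      induction ha using Submodule.span_induction generalizing b with
      | mem r hr =>
          obtain ⟨u, rfl⟩ := hr
          induction hb using Submodule.span_induction with
          | mem s hs =>
              obtain ⟨v, rfl⟩ := hs
              rw [← W_append]
              exact Submodule.subset_span ⟨u ++ v, rfl⟩
          | zero => rw [mul_zero]; exact Submodule.zero_mem _
          | add y z _ _ hy hz => rw [mul_add]; exact Submodule.add_mem _ hy hz
          | smul n y _ hy => rw [mul_smul_comm]; exact Submodule.smul_mem _ _ hy
      | zero => rw [zero_mul]; exact Submodule.zero_mem _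
      | add y z hy hz hy' hz' => rw [add_mul]; exact Submodule.add_mem _ (hy' _ hb) (hz' _ hb)
      | smul n y hy hy' => rw [smul_mul_assoc]; exact Submodule.smul_mem _ _ (hy' _ hb)
  | add a b ha hb => exact Submodule.add_mem _ ha hb

lemma mem_span (a : R) : a ∈ Submodule.span ℤ (Set.range W) := by
  rw [span_W]; trivial

/-! ### vanishing of ψ on quadruple brackets -/

lemma key_words (u v w t : List ℕ) :
    ψ (br (br (br (W u) (W v)) (W w)) (W t)) = 0 := by
  have e : br (br (br (W u) (W v)) (W w)) (W t) =
      W (u ++ (v ++ (w ++ t))) - W (v ++ (u ++ (w ++ t)))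
      - W (w ++ (u ++ (v ++ t))) + W (w ++ (v ++ (u ++ t)))
      - W (t ++ (u ++ (v ++ w))) + W (t ++ (v ++ (u ++ w)))
      + W (t ++ (w ++ (u ++ v))) - W (t ++ (w ++ (v ++ u))) := by
    simp only [W_append, br]
    noncomm_ring
  rw [e]
  simp only [map_sub, map_add, psi_W]
  linear_combination cRel u v w t

lemma key1 (u v w : List ℕ) (a : R) : ψ (br (br (br (W u) (W v)) (W w)) a) = 0 := by
  induction mem_span a using Submodule.span_induction with
  | mem r hr => obtain ⟨t, rfl⟩ := hr; exact key_words u v w t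
  | zero => rw [br_zero_right]; exact map_zero ψ
  | add y z _ _ hy hz => rw [br_add_right, map_add, hy, hz, add_zero]
  | smul n y _ hy => rw [br_smul_right, map_smul, hy, smul_zero]

lemma key2 (u v : List ℕ) (b a : R) : ψ (br (br (br (W u) (W v)) b) a) = 0 := by
  induction mem_span b using Submodule.span_induction with
  | mem r hr => obtain ⟨w, rfl⟩ := hr; exact key1 u v w a
  | zero => rw [br_zero_right, br_zero_left]; exact map_zero ψ
  | add y z _ _ hy hz => rw [br_add_right, br_add_left, map_add, hy, hz, add_zero]
  | smul n y _ hy => rw [br_smul_right, br_smul_left, map_smul, hy, smul_zero]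

lemma key3 (u : List ℕ) (c b a : R) : ψ (br (br (br (W u) c) b) a) = 0 := by
  induction mem_span c using Submodule.span_induction with
  | mem r hr => obtain ⟨v, rfl⟩ := hr; exact key2 u v b a
  | zero => rw [br_zero_right, br_zero_left, br_zero_left]; exact map_zero ψ
  | add y z _ _ hy hz =>
      rw [br_add_right, br_add_left, br_add_left, map_add, hy, hz, add_zero]
  | smul n y _ hy =>
      rw [br_smul_right, br_smul_left, br_smul_left, map_smul, hy, smul_zero]

lemma key4 (g c b a : R) : ψ (br (br (br g c) b) a) = 0 := by
  induction mem_span g using Submodule.span_induction with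
  | mem r hr => obtain ⟨u, rfl⟩ := hr; exact key3 u c b a
  | zero => rw [br_zero_left, br_zero_left, br_zero_left]; exact map_zero ψ
  | add y z _ _ hy hz =>
      rw [br_add_left, br_add_left, br_add_left, map_add, hy, hz, add_zero]
  | smul n y _ hy =>
      rw [br_smul_left, br_smul_left, br_smul_left, map_smul, hy, smul_zero]

/-! ### ψ vanishes on `gamma 3` -/

lemma psi_gamma1 (g : R) (hg : g ∈ gamma 1) (b a : R) : ψ (br (br g b) a) = 0 := by
  rw [gamma] at hg
  induction hg using AddSubgroup.closure_induction with
  | mem r hr => obtain ⟨k, -, c, rfl⟩ := hr; exact key4 k c b a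
  | zero => rw [br_zero_left, br_zero_left]; exact map_zero ψ
  | add y z _ _ hy hz => rw [br_add_left, br_add_left, map_add, hy, hz, add_zero]
  | neg y _ hy => rw [br_neg_left, br_neg_left, map_neg, hy, neg_zero]

lemma psi_gamma2 (g : R) (hg : g ∈ gamma 2) (a : R) : ψ (br g a) = 0 := by
  rw [gamma] at hg
  induction hg using AddSubgroup.closure_induction with
  | mem r hr => obtain ⟨k, hk, c, rfl⟩ := hr; exact psi_gamma1 k hk c a
  | zero => rw [br_zero_left]; exact map_zero ψ
  | add y z _ _ hy hz => rw [br_add_left, map_add, hy, hz, add_zero]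
  | neg y _ hy => rw [br_neg_left, map_neg, hy, neg_zero]

lemma psi_gamma3 (g : R) (hg : g ∈ gamma 3) : ψ g = 0 := by
  rw [gamma] at hg
  induction hg using AddSubgroup.closure_induction with
  | mem r hr => obtain ⟨k, hk, c, rfl⟩ := hr; exact psi_gamma2 k hk c
  | zero => exact map_zero ψ
  | add y z _ _ hy hz => rw [map_add, hy, hz, add_zero]
  | neg y _ hy => rw [map_neg, hy, neg_zero]

/-! ### ψ of w -/

lemma w_expand : br (x 1 * br (br (x 2) (x 3)) (x 4)) (x 5) =
    W [1,2,3,4,5] - W [1,3,2,4,5] - W [1,4,2,3,5] + W [1,4,3,2,5]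
    - W [5,1,2,3,4] + W [5,1,3,2,4] + W [5,1,4,2,3] - W [5,1,4,3,2] := by
  simp only [W, List.map, List.prod_cons, List.prod_nil, x, br, mul_one]
  noncomm_ring

lemma part3 : br (x 1 * br (br (x 2) (x 3)) (x 4)) (x 5) ∉ gamma 3 := by
  intro hmem
  have h0 := psi_gamma3 _ hmem
  rw [w_expand] at h0
  simp only [map_sub, map_add, psi_W] at h0
  have hne : cz [1,2,3,4,5] - cz [1,3,2,4,5] - cz [1,4,2,3,5] + cz [1,4,3,2,5]
      - cz [5,1,2,3,4] + cz [5,1,3,2,4] + cz [5,1,4,2,3] - cz [5,1,4,3,2] ≠ 0 := by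
    decide
  exact hne h0


/-- For `w = [x₁[x₂,x₃,x₄], x₅]` one has `w ∈ γ₃`, `6w ∈ γ₄`, but `w ∉ γ₄`. -/
theorem stmt7 :
    br (x 1 * br (br (x 2) (x 3)) (x 4)) (x 5) ∈ gamma 2 ∧
    (6 : ℤ) • br (x 1 * br (br (x 2) (x 3)) (x 4)) (x 5) ∈ gamma 3 ∧
    br (x 1 * br (br (x 2) (x 3)) (x 4)) (x 5) ∉ gamma 3 := by
  exact ⟨part1, part2, part3⟩

end
end

section
/- For every n ≥ 2, the additive subgroup Vₙ of multilinear Lie elements of degree n (elements of the free Lie ring L(X) that are multilinear in x₁,...,xₙ) is a free abelian group with basis the set of left-normed commutators [xₙ, x_{i₁}, ..., x_{i_{n−1}}] where (i₁,...,i_{n−1}) runs over all permutations of (1,...,n−1). -/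
noncomputable section

attribute [local instance] LieRing.ofAssociativeRing

/-- `L(X)`: the free Lie ring on `X`, realized as the Lie subring of `ℤ⟨X⟩`
(with bracket `[a,b] = ab - ba`) generated by the free generators. -/
def L : LieSubalgebra ℤ R := LieSubalgebra.lieSpan ℤ R (Set.range x)

/-- `Pₙ`: the additive subgroup generated by the monomials of degree 1 in each of
`x₁, …, xₙ` containing no other variable. -/
def Pn (n : ℕ) : Submodule ℤ R :=
  Submodule.span ℤ
    {y | ∃ σ : Equiv.Perm (Fin n), y = (List.ofFn fun i => x ((σ i : ℕ) + 1)).prod}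

/-- `Vₙ = L(X) ∩ Pₙ`. -/
def Vn (n : ℕ) : Submodule ℤ R := L.toSubmodule ⊓ Pn n

/-! ### Auxiliary material -/

instance : DecidableEq (FreeMonoid ℕ) := Classical.decEq _

def e : R ≃ₐ[ℤ] MonoidAlgebra ℤ (FreeMonoid ℕ) := FreeAlgebra.equivMonoidAlgebraFreeMonoid

theorem e_x (i : ℕ) : e (x i) = MonoidAlgebra.single (FreeMonoid.of i) 1 := by
  simp [e, x, FreeAlgebra.equivMonoidAlgebraFreeMonoid, MonoidAlgebra.of_apply]

theorem ofList_inj {l₁ l₂ : List ℕ} (h : FreeMonoid.ofList l₁ = FreeMonoid.ofList l₂) :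
    l₁ = l₂ := FreeMonoid.ofList.injective h

theorem e_prod (l : List ℕ) :
    e (l.map x).prod = MonoidAlgebra.single (FreeMonoid.ofList l) 1 := by
  induction l with
  | nil => simp; rfl
  | cons a t ih =>
      simp only [List.map_cons, List.prod_cons, map_mul, ih, e_x,
        MonoidAlgebra.single_mul_single, one_mul, FreeMonoid.ofList_cons]

/-! #### Permutation lemmas for lists -/

theorem exists_perm_list {n : ℕ} {g : Fin n → ℕ} (hg : Function.Injective g) {l : List ℕ}
    (h : l.Perm (List.ofFn g)) : ∃ σ : Equiv.Perm (Fin n), l = List.ofFn (g ∘ σ) := by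
  classical
  have hlen : l.length = n := by simpa using h.length_eq
  have hnd : l.Nodup := h.nodup_iff.mpr (List.nodup_ofFn.mpr hg)
  have hmem : ∀ i : Fin n, ∃ j : Fin n, g j = l.get (Fin.cast hlen.symm i) := by
    intro i
    have : l.get (Fin.cast hlen.symm i) ∈ List.ofFn g := h.subset (l.get_mem _)
    rcases List.mem_ofFn.1 this with ⟨j, hj⟩
    exact ⟨j, hj⟩
  choose τ hτ using hmem
  have hinj : Function.Injective τ := by
    intro i i' hii
    have := congrArg g hii
    rw [hτ, hτ] at this
    have := List.nodup_iff_injective_get.1 hnd this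
    simpa [Fin.ext_iff] using this
  let σ : Equiv.Perm (Fin n) := Equiv.ofBijective τ ((Finite.injective_iff_bijective).1 hinj)
  refine ⟨σ, ?_⟩
  apply List.ext_get (by simp [hlen])
  intro i h1 h2
  simp only [List.get_ofFn]
  rw [show (Function.comp g σ) (Fin.cast (by simp) ⟨i, h2⟩) = l.get ⟨i, h1⟩ from ?_]
  show g (τ _) = _
  rw [hτ]
  rfl

theorem perm_ofFn_comp {n : ℕ} (g : Fin n → ℕ) (σ : Equiv.Perm (Fin n)) :
    (List.ofFn (g ∘ σ)).Perm (List.ofFn g) := by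
  classical
  rw [List.ofFn_eq_map, List.ofFn_eq_map, show (List.finRange n).map (g ∘ σ)
    = ((List.finRange n).map σ).map g by simp [List.map_map, Function.comp]]
  apply List.Perm.map
  apply List.perm_of_nodup_nodup_toFinset_eq
  · exact (List.nodup_finRange n).map σ.injective
  · exact List.nodup_finRange n
  · ext i
    simp only [List.mem_toFinset, List.mem_map]
    constructor
    · intro _; exact List.mem_finRange i
    · intro _; exact ⟨σ.symm i, List.mem_finRange _, by simp⟩

/-! #### Multidegrees -/

def deg (w : FreeMonoid ℕ) : Multiset ℕ := (FreeMonoid.toList w : Multiset ℕ)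

theorem deg_mul (a b : FreeMonoid ℕ) : deg (a * b) = deg a + deg b := by
  simp [deg, FreeMonoid.toList_mul]

def HM (μ : Multiset ℕ) : Submodule ℤ R where
  carrier := {r | ∀ w ∈ (e r).coeff.support, deg w = μ}
  add_mem' := by
    intro a b ha hb w hw
    rw [map_add, MonoidAlgebra.coeff_add] at hw
    rcases Finset.mem_union.1 (Finsupp.support_add hw) with h | h
    · exact ha w h
    · exact hb w h
  zero_mem' := by simp
  smul_mem' := by
    intro c r hr w hw
    rw [map_smul, MonoidAlgebra.coeff_smul] at hw
    exact hr w (Finsupp.support_smul hw)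

theorem HM_mul {μ ν : Multiset ℕ} {r s : R} (hr : r ∈ HM μ) (hs : s ∈ HM ν) :
    r * s ∈ HM (μ + ν) := by
  show ∀ w ∈ (e (r * s)).coeff.support, deg w = μ + ν
  intro w hw
  rw [map_mul] at hw
  rcases Finset.mem_mul.1 (MonoidAlgebra.support_coeff_mul_subset (e r) (e s) hw) with ⟨a, ha, b, hb, rfl⟩
  rw [deg_mul, hr a ha, hs b hb]

theorem HM_x (i : ℕ) : x i ∈ HM {i} := by
  show ∀ w ∈ (e (x i)).coeff.support, deg w = {i}
  intro w hw
  rw [e_x, MonoidAlgebra.coeff_single] at hw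
  have := Finsupp.support_single_subset hw
  simp only [Finset.mem_singleton] at this
  subst this
  rfl

theorem HM_br {μ ν : Multiset ℕ} {r s : R} (hr : r ∈ HM μ) (hs : s ∈ HM ν) :
    br r s ∈ HM (μ + ν) := by
  have h1 := HM_mul hr hs
  have h2 := HM_mul hs hr
  rw [add_comm] at h2
  exact sub_mem h1 h2

theorem HM_foldl (n : ℕ) (l : List ℕ) :
    (l.map x).foldl br (x n) ∈ HM (↑(n :: l) : Multiset ℕ) := by
  induction l using List.reverseRecOn with
  | nil => exact HM_x n
  | append_singleton t j ih =>
      rw [List.map_append, List.foldl_append]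
      simp only [List.map_cons, List.map_nil, List.foldl_cons, List.foldl_nil]
      have := HM_br ih (HM_x j)
      convert this using 2
      rw [← Multiset.coe_singleton, Multiset.coe_add, List.cons_append]

/-! #### The coefficient computation -/

theorem coef_foldl (n : ℕ) (l l' : List ℕ) (hl' : ∀ a ∈ l', a ≠ n) :
    (e ((l'.map x).foldl br (x n))).coeff (FreeMonoid.ofList (n :: l)) = if l = l' then 1 else 0 := by
  classical
  induction l' using List.reverseRecOn generalizing l with
  | nil =>
      simp only [List.map_nil, List.foldl_nil, e_x, MonoidAlgebra.coeff_single]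
      rw [Finsupp.single_apply]
      have : (FreeMonoid.of n = FreeMonoid.ofList (n :: l)) ↔ l = [] := by
        rw [← FreeMonoid.ofList_singleton]
        constructor
        · intro h; have := ofList_inj h
          simpa [eq_comm] using (List.cons.injEq n [] n l ▸ this).2.symm
        · rintro rfl; rfl
      by_cases hc : l = []
      · rw [if_pos (this.mpr hc), if_pos hc]
      · rw [if_neg (fun h => hc (this.mp h)), if_neg hc]
  | append_singleton t j ih =>
      have hj : j ≠ n := hl' j (by simp)
      have ht : ∀ a ∈ t, a ≠ n := fun a ha => hl' a (by simp [ha])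
      rw [List.map_append, List.foldl_append]
      simp only [List.map_cons, List.map_nil, List.foldl_cons, List.foldl_nil]
      set c : R := (t.map x).foldl br (x n) with hc
      have hbr : br c (x j) = c * x j - x j * c := rfl
      rw [hbr, map_sub, map_mul, map_mul, e_x, MonoidAlgebra.coeff_sub, Finsupp.sub_apply]
      have hterm2 : (MonoidAlgebra.single (FreeMonoid.of j) (1:ℤ) * e c).coeff
          (FreeMonoid.ofList (n :: l)) = 0 := by
        apply MonoidAlgebra.single_mul_apply_of_not_exists_mul
        rintro ⟨d, hd⟩
        have : n :: l = j :: FreeMonoid.toList d := by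
          have := congrArg FreeMonoid.toList hd
          simpa [FreeMonoid.toList_mul] using this
        exact hj (List.cons_eq_cons.mp this).1.symm
      rw [hterm2, sub_zero]
      rcases List.eq_nil_or_concat l with rfl | ⟨t₂, a, rfl⟩
      · rw [MonoidAlgebra.mul_single_apply_of_not_exists_mul _ _ (by
          rintro ⟨d, hd⟩
          have hlist : [n] = FreeMonoid.toList d ++ [j] := by
            have := congrArg FreeMonoid.toList hd
            simpa [FreeMonoid.toList_mul] using this
          have hnil : FreeMonoid.toList d = [] := by
            have hlen := congrArg List.length hlist
            simp at hlen
            exact hlen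
          rw [hnil] at hlist
          simp at hlist
          exact hj hlist.symm)]
        rw [if_neg (by simp)]
      · simp only [List.concat_eq_append]
        by_cases haj : a = j
        · rw [haj]
          have H : ∀ d : FreeMonoid ℕ, d * FreeMonoid.of j = FreeMonoid.ofList (n :: (t₂ ++ [j]))
              ↔ d = FreeMonoid.ofList (n :: t₂) := by
            intro d
            constructor
            · intro h
              have hlist : FreeMonoid.toList d ++ [j] = (n :: t₂) ++ [j] := by
                have := congrArg FreeMonoid.toList h
                simpa [FreeMonoid.toList_mul] using this
              have := List.append_cancel_right hlist
              exact FreeMonoid.toList.injective (by simpa using this)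
            · rintro rfl
              apply FreeMonoid.toList.injective
              simp [FreeMonoid.toList_mul]
          rw [MonoidAlgebra.coeff_mul_single_eq_coeff_mul _ (fun d _ => H d), ih t₂ ht, mul_one]
          by_cases hc2 : t₂ = t
          · rw [if_pos hc2, if_pos (by rw [hc2])]
          · rw [if_neg hc2, if_neg (fun h => hc2 (List.append_cancel_right h))]
        · rw [MonoidAlgebra.mul_single_apply_of_not_exists_mul _ _ (by
            rintro ⟨d, hd⟩
            have hlist : (n :: t₂) ++ [a] = FreeMonoid.toList d ++ [j] := by
              have := congrArg FreeMonoid.toList hd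
              simpa [FreeMonoid.toList_mul] using this
            have := List.append_inj' hlist (by simp)
            exact haj (by simpa using this.2))]
          rw [if_neg (fun h => haj (by
            have := List.append_inj'
              (show (n :: t₂) ++ [a] = (n :: t) ++ [j] by simpa using h) (by simp)
            simpa using this.2))]

/-! #### Bracket identities -/

theorem br_add (u a b : R) : br u (a + b) = br u a + br u b := by unfold br; noncomm_ring
theorem add_br (a b u : R) : br (a + b) u = br a u + br b u := by unfold br; noncomm_ring
theorem br_zero (u : R) : br u 0 = 0 := by unfold br; noncomm_ring
theorem zero_br (u : R) : br 0 u = 0 := by unfold br; noncomm_ring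
theorem br_smul (u : R) (c : ℤ) (m : R) : br u (c • m) = c • br u m := by
  unfold br; rw [mul_smul_comm, smul_mul_assoc, ← smul_sub]
theorem smul_br (c : ℤ) (m u : R) : br (c • m) u = c • br m u := by
  unfold br; rw [mul_smul_comm, smul_mul_assoc, ← smul_sub]
theorem lie_eq_br (a b : R) : ⁅a, b⁆ = br a b := Ring.lie_def a b
theorem br_jacobi (u a b : R) : br u (br a b) = br (br u a) b - br (br u b) a := by
  unfold br; noncomm_ring
theorem br_neg_swap (a b : R) : br a b = - br b a := by unfold br; noncomm_ring

/-! #### The submodule of left-normed commutators starting with `x n` -/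

def Uset (n : ℕ) : Set R := {r | ∃ l : List ℕ, r = (l.map x).foldl br (x n)}
def U (n : ℕ) : Submodule ℤ R := Submodule.span ℤ (Uset n)

theorem x_mem_L (i : ℕ) : x i ∈ L := LieSubalgebra.subset_lieSpan ⟨i, rfl⟩

theorem Uset_mem_L {n : ℕ} {r : R} (h : r ∈ Uset n) : r ∈ L := by
  obtain ⟨l, rfl⟩ := h
  induction l using List.reverseRecOn with
  | nil => exact x_mem_L n
  | append_singleton t j ih =>
      rw [List.map_append, List.foldl_append]
      simp only [List.map_cons, List.map_nil, List.foldl_cons, List.foldl_nil]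
      rw [← lie_eq_br]
      exact L.lie_mem ih (x_mem_L j)

theorem U_le_L (n : ℕ) : U n ≤ L.toSubmodule :=
  Submodule.span_le.mpr fun _ h => Uset_mem_L h

theorem br_x_mem_U {n : ℕ} (j : ℕ) {u : R} (hu : u ∈ U n) : br u (x j) ∈ U n := by
  induction hu using Submodule.span_induction with
  | mem r hr =>
      obtain ⟨l, rfl⟩ := hr
      apply Submodule.subset_span
      exact ⟨l ++ [j], by rw [List.map_append, List.foldl_append]; rfl⟩
  | zero => rw [zero_br]; exact (U n).zero_mem
  | add a b _ _ ha hb => rw [add_br]; exact (U n).add_mem ha hb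
  | smul c a _ ha => rw [smul_br]; exact (U n).smul_mem c ha

theorem br_mem_U {n : ℕ} {m : R} (hm : m ∈ L) : ∀ u ∈ U n, br u m ∈ U n := by
  let S : LieSubalgebra ℤ R :=
    { carrier := {m | ∀ u ∈ U n, br u m ∈ U n}
      add_mem' := fun {a b} ha hb u hu => by
        rw [br_add]; exact (U n).add_mem (ha u hu) (hb u hu)
      zero_mem' := fun u hu => by rw [br_zero]; exact (U n).zero_mem
      smul_mem' := fun c a ha u hu => by rw [br_smul]; exact (U n).smul_mem c (ha u hu)
      lie_mem' := fun {a b} ha hb u hu => by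
        rw [lie_eq_br, br_jacobi]
        exact (U n).sub_mem (hb _ (ha u hu)) (ha _ (hb u hu)) }
  have hL : L ≤ S := by
    rw [L, LieSubalgebra.lieSpan_le]
    rintro r ⟨j, rfl⟩
    exact fun u hu => br_x_mem_U j hu
  exact hL hm

/-! #### The Lie subring generated by the other variables -/

def N (n : ℕ) : LieSubalgebra ℤ R := LieSubalgebra.lieSpan ℤ R (x '' {i | i ≠ n})

theorem N_le_L (n : ℕ) : N n ≤ L :=
  LieSubalgebra.lieSpan_mono (by rintro r ⟨i, _, rfl⟩; exact ⟨i, rfl⟩)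

def K (n : ℕ) : LieSubalgebra ℤ R :=
  { carrier := {r | ∀ w ∈ (e r).coeff.support, n ∉ FreeMonoid.toList w}
    add_mem' := fun {a b} ha hb w hw => by
      rw [map_add, MonoidAlgebra.coeff_add] at hw
      rcases Finset.mem_union.1 (Finsupp.support_add hw) with h | h
      · exact ha w h
      · exact hb w h
    zero_mem' := by simp
    smul_mem' := fun c a ha w hw => by
      rw [map_smul, MonoidAlgebra.coeff_smul] at hw
      exact ha w (Finsupp.support_smul hw)
    lie_mem' := fun {a b} ha hb w hw => by
      rw [lie_eq_br] at hw
      have hmul : ∀ {p q : R}, (∀ w ∈ (e p).coeff.support, n ∉ FreeMonoid.toList w) →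
          (∀ w ∈ (e q).coeff.support, n ∉ FreeMonoid.toList w) →
          ∀ w ∈ (e (p * q)).coeff.support, n ∉ FreeMonoid.toList w := by
        intro p q hp hq w hw
        rw [map_mul] at hw
        rcases Finset.mem_mul.1 (MonoidAlgebra.support_coeff_mul_subset (e p) (e q) hw) with
          ⟨w1, h1, w2, h2, rfl⟩
        rw [FreeMonoid.toList_mul, List.mem_append]
        rintro (h | h)
        · exact hp w1 h1 h
        · exact hq w2 h2 h
      have hbr : br a b = a * b - b * a := rfl
      rw [hbr, map_sub, MonoidAlgebra.coeff_sub] at hw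
      rcases Finset.mem_union.1 (Finsupp.support_sub hw) with h | h
      · exact hmul ha hb w h
      · exact hmul hb ha w h }

theorem N_le_K (n : ℕ) : N n ≤ K n := by
  rw [N, LieSubalgebra.lieSpan_le]
  rintro r ⟨i, hi, rfl⟩
  show ∀ w ∈ (e (x i)).coeff.support, n ∉ FreeMonoid.toList w
  intro w hw
  rw [e_x, MonoidAlgebra.coeff_single] at hw
  have := Finsupp.support_single_subset hw
  simp only [Finset.mem_singleton] at this
  subst this
  simpa using Ne.symm hi

/-! #### `L ≤ U ⊔ N` -/

def T (n : ℕ) : LieSubalgebra ℤ R :=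
  { toSubmodule := U n ⊔ (N n).toSubmodule
    lie_mem' := by
      intro a b ha hb
      rcases Submodule.mem_sup.1 ha with ⟨u₁, hu₁, m₁, hm₁, rfl⟩
      rcases Submodule.mem_sup.1 hb with ⟨u₂, hu₂, m₂, hm₂, rfl⟩
      show ⁅u₁ + m₁, u₂ + m₂⁆ ∈ U n ⊔ (N n).toSubmodule
      rw [lie_eq_br, br_add, add_br, add_br]
      have h11 : br u₁ u₂ ∈ U n := br_mem_U (U_le_L n hu₂) u₁ hu₁
      have h12 : br u₁ m₂ ∈ U n := br_mem_U (N_le_L n hm₂) u₁ hu₁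
      have h21 : br m₁ u₂ ∈ U n := by
        rw [br_neg_swap]
        exact (U n).neg_mem (br_mem_U (N_le_L n hm₁) u₂ hu₂)
      have h22 : br m₁ m₂ ∈ (N n).toSubmodule := by
        rw [← lie_eq_br]; exact (N n).lie_mem hm₁ hm₂
      refine Submodule.add_mem _ (Submodule.add_mem _ ?_ ?_) (Submodule.add_mem _ ?_ ?_)
      · exact Submodule.mem_sup_left h11
      · exact Submodule.mem_sup_left h21
      · exact Submodule.mem_sup_left h12
      · exact Submodule.mem_sup_right h22 }

theorem L_le_T (n : ℕ) : L ≤ T n := by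
  rw [L, LieSubalgebra.lieSpan_le]
  rintro r ⟨i, rfl⟩
  by_cases hi : i = n
  · subst hi
    exact Submodule.mem_sup_left (Submodule.subset_span ⟨[], rfl⟩)
  · exact Submodule.mem_sup_right (LieSubalgebra.subset_lieSpan ⟨i, hi, rfl⟩)

/-! #### The multilinear multidegree -/

def mu (m : ℕ) : Multiset ℕ := ((List.ofFn fun i : Fin m => (i : ℕ) + 1 : List ℕ) : Multiset ℕ)

theorem deg_ofList (l : List ℕ) : deg (FreeMonoid.ofList l) = (l : Multiset ℕ) := rfl

theorem deg_perm_word {m : ℕ} (σ : Equiv.Perm (Fin m)) :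
    ((List.ofFn fun i => (σ i : ℕ) + 1 : List ℕ) : Multiset ℕ) = mu m := by
  rw [mu, Multiset.coe_eq_coe]
  exact perm_ofFn_comp (fun i : Fin m => (i : ℕ) + 1) σ

theorem mu_succ (m : ℕ) : mu (m + 1) = (m + 1) ::ₘ mu m := by
  rw [mu, mu, show ((m:ℕ) + 1) ::ₘ ((List.ofFn fun i : Fin m => (i : ℕ) + 1 : List ℕ) : Multiset ℕ)
    = (((m + 1) :: List.ofFn fun i : Fin m => (i : ℕ) + 1 : List ℕ) : Multiset ℕ) from rfl,
    Multiset.coe_eq_coe, List.ofFn_succ']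
  simp only [Fin.coe_castSucc, Fin.val_last, List.concat_eq_append]
  exact List.perm_append_singleton _ _

theorem mem_mu_self (m : ℕ) : (m + 1) ∈ mu (m + 1) := by
  rw [mu_succ]; exact Multiset.mem_cons_self _ _

/-! #### `Pn` and the homogeneous component -/

theorem Pn_gen_eq {n : ℕ} (σ : Equiv.Perm (Fin n)) :
    (List.ofFn fun i => x ((σ i : ℕ) + 1)).prod
      = (((List.ofFn fun i => (σ i : ℕ) + 1).map x)).prod := by
  rw [List.map_ofFn]
  rfl

theorem Pn_le_HM (n : ℕ) : Pn n ≤ HM (mu n) := by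
  rw [Pn, Submodule.span_le]
  rintro r ⟨σ, rfl⟩
  show ∀ w ∈ (e _).coeff.support, deg w = mu n
  intro w hw
  rw [Pn_gen_eq, e_prod, MonoidAlgebra.coeff_single] at hw
  have := Finsupp.support_single_subset hw
  simp only [Finset.mem_singleton] at this
  subst this
  rw [deg_ofList, deg_perm_word]

theorem HM_le_Pn (n : ℕ) : HM (mu n) ≤ Pn n := by
  intro r hr
  have hmem : ∀ w ∈ (e r).coeff.support, e.symm (MonoidAlgebra.single w (1:ℤ)) ∈ Pn n := by
    intro w hw
    have hdeg : deg w = mu n := hr w hw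
    have hperm : (FreeMonoid.toList w).Perm (List.ofFn fun i : Fin n => (i : ℕ) + 1) := by
      rw [← Multiset.coe_eq_coe]; exact hdeg
    obtain ⟨σ, hσ⟩ := exists_perm_list
      (g := fun i : Fin n => (i : ℕ) + 1)
      (fun i j hij => Fin.ext (Nat.succ_injective (by simpa using hij))) hperm
    have hw' : w = FreeMonoid.ofList (List.ofFn fun i => (σ i : ℕ) + 1) := by
      apply FreeMonoid.toList.injective
      rw [hσ]; rfl
    apply Submodule.subset_span
    refine ⟨σ, ?_⟩
    rw [Pn_gen_eq]
    apply e.injective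
    rw [e_prod, AlgEquiv.apply_symm_apply, hw']
  have key : e.symm (e r) ∈ Pn n := by
    rw [← MonoidAlgebra.sum_coeff_single (e r), map_finsuppSum]
    apply Submodule.sum_mem
    intro w hw
    show e.symm (MonoidAlgebra.single w ((e r).coeff w)) ∈ Pn n
    have hs : MonoidAlgebra.single w ((e r).coeff w) = (e r).coeff w • MonoidAlgebra.single w (1:ℤ) := by
      rw [MonoidAlgebra.smul_single, smul_eq_mul, mul_one]
    rw [hs, map_smul]
    exact Submodule.smul_mem _ _ (hmem w hw)
  simpa using key


/-! #### The projection onto the multilinear component -/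

def pp (n : ℕ) : R →ₗ[ℤ] R where
  toFun r := e.symm (MonoidAlgebra.ofCoeff ((e r).coeff.filter (fun w => deg w = mu n)))
  map_add' a b := by
    simp only [map_add, MonoidAlgebra.coeff_add]
    rw [Finsupp.filter_add]
    exact map_add e.symm (MonoidAlgebra.ofCoeff _) (MonoidAlgebra.ofCoeff _)
  map_smul' c a := by
    simp only [map_smul, MonoidAlgebra.coeff_smul, RingHom.id_apply]
    rw [map_smul, MonoidAlgebra.coeff_smul, Finsupp.filter_smul]
    exact map_smul e.symm c (MonoidAlgebra.ofCoeff _)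

theorem pp_eq_self {n : ℕ} {r : R} (hr : r ∈ HM (mu n)) : pp n r = r := by
  show e.symm (MonoidAlgebra.ofCoeff ((e r).coeff.filter (fun w => deg w = mu n))) = r
  rw [(Finsupp.filter_eq_self_iff _ _).2 fun w hw => hr w (Finsupp.mem_support_iff.2 hw)]
  rw [MonoidAlgebra.ofCoeff_coeff]
  exact e.symm_apply_apply r

theorem pp_eq_zero_of_HM {n : ℕ} {ν : Multiset ℕ} {r : R} (hr : r ∈ HM ν) (hν : ν ≠ mu n) :
    pp n r = 0 := by
  show e.symm (MonoidAlgebra.ofCoeff ((e r).coeff.filter (fun w => deg w = mu n))) = 0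
  rw [(Finsupp.filter_eq_zero_iff _ _).2 fun w hpw => by
    by_contra h
    exact hν ((hr w (Finsupp.mem_support_iff.2 h)).symm.trans hpw)]
  exact map_zero e.symm

theorem pp_eq_zero_of_K {n : ℕ} (hn : 1 ≤ n) {r : R} (hr : r ∈ K n) : pp n r = 0 := by
  show e.symm (MonoidAlgebra.ofCoeff ((e r).coeff.filter (fun w => deg w = mu n))) = 0
  rw [(Finsupp.filter_eq_zero_iff _ _).2 fun w hpw => by
    by_contra h
    have hnot := hr w (Finsupp.mem_support_iff.2 h)
    have hmem : n ∈ deg w := by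
      rw [hpw]
      have := mem_mu_self (n - 1)
      rwa [Nat.sub_add_cancel hn] at this
    exact hnot (by simpa [deg] using hmem)]
  exact map_zero e.symm

/-! #### The basis elements -/

def cR (n : ℕ) (σ : Equiv.Perm (Fin (n - 1))) : R :=
  (List.ofFn fun j : Fin (n - 1) => x ((σ j : ℕ) + 1)).foldl br (x n)

theorem cR_eq (n : ℕ) (σ : Equiv.Perm (Fin (n - 1))) :
    cR n σ = (((List.ofFn fun j : Fin (n - 1) => (σ j : ℕ) + 1)).map x).foldl br (x n) := by
  rw [cR, List.map_ofFn]
  rfl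

theorem cR_mem_HM {n : ℕ} (hn : 1 ≤ n) (σ : Equiv.Perm (Fin (n - 1))) :
    cR n σ ∈ HM (mu n) := by
  have h := HM_foldl n (List.ofFn fun j : Fin (n - 1) => (σ j : ℕ) + 1)
  rw [← cR_eq] at h
  have hdeg : ((↑(n :: List.ofFn fun j : Fin (n - 1) => (σ j : ℕ) + 1) : Multiset ℕ)) = mu n := by
    have h1 : ((↑(n :: List.ofFn fun j : Fin (n - 1) => (σ j : ℕ) + 1) : Multiset ℕ))
        = n ::ₘ ((↑(List.ofFn fun j : Fin (n - 1) => (σ j : ℕ) + 1) : Multiset ℕ)) := rfl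
    rw [h1, deg_perm_word σ]
    have h2 := mu_succ (n - 1)
    rw [Nat.sub_add_cancel hn] at h2
    exact h2.symm
  rwa [hdeg] at h

theorem pp_U_mem {n : ℕ} (hn : 1 ≤ n) {u : R} (hu : u ∈ U n) :
    pp n u ∈ Submodule.span ℤ (Set.range (cR n)) := by
  induction hu using Submodule.span_induction with
  | mem r hr =>
      obtain ⟨l, rfl⟩ := hr
      by_cases h : ((n :: l : List ℕ) : Multiset ℕ) = mu n
      · rw [pp_eq_self (h ▸ HM_foldl n l)]
        have hl : (l : Multiset ℕ) = mu (n - 1) := by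
          have h2 := mu_succ (n - 1)
          rw [Nat.sub_add_cancel hn] at h2
          have : (n ::ₘ (l : Multiset ℕ)) = n ::ₘ mu (n - 1) := by
            rw [← h2]
            exact h
          exact (Multiset.cons_inj_right n).1 this
        have hperm : l.Perm (List.ofFn fun i : Fin (n - 1) => (i : ℕ) + 1) := by
          rw [← Multiset.coe_eq_coe]
          exact hl
        obtain ⟨σ, hσ⟩ := exists_perm_list
          (g := fun i : Fin (n - 1) => (i : ℕ) + 1)
          (fun i j hij => Fin.ext (Nat.succ_injective (by simpa using hij))) hperm
        apply Submodule.subset_span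
        refine ⟨σ, ?_⟩
        rw [cR_eq]
        congr 1
        rw [hσ]
        rfl
      · rw [pp_eq_zero_of_HM (HM_foldl n l) h]
        exact Submodule.zero_mem _
  | zero => rw [map_zero]; exact Submodule.zero_mem _
  | add a b _ _ ha hb => rw [map_add]; exact Submodule.add_mem _ ha hb
  | smul c a _ ha => rw [map_smul]; exact Submodule.smul_mem _ c ha

theorem word_inj {m : ℕ} {σ τ : Equiv.Perm (Fin m)}
    (h : (List.ofFn fun j => (σ j : ℕ) + 1) = (List.ofFn fun j => (τ j : ℕ) + 1)) : σ = τ := by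
  have := List.ofFn_inj.1 h
  exact Equiv.ext fun j => Fin.ext (Nat.succ_injective (congrFun this j))

theorem cR_li (n : ℕ) (hn : 2 ≤ n) : LinearIndependent ℤ (cR n) := by
  rw [Fintype.linearIndependent_iff]
  intro g hg τ
  classical
  set wτ : FreeMonoid ℕ := FreeMonoid.ofList (n :: List.ofFn fun j : Fin (n - 1) => (τ j : ℕ) + 1)
  have happ := congrArg (fun r : R => (e r).coeff wτ) hg
  simp only [map_sum, map_smul, map_zero, MonoidAlgebra.coeff_sum, MonoidAlgebra.coeff_zero] at happ
  rw [Finsupp.coe_finset_sum, Finset.sum_apply] at happ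
  have hcoe : ∀ σ : Equiv.Perm (Fin (n - 1)),
      (e (g σ • cR n σ)).coeff wτ = g σ * (if σ = τ then 1 else 0) := by
    intro σ
    rw [map_smul, MonoidAlgebra.coeff_smul_apply, smul_eq_mul]
    congr 1
    rw [cR_eq]
    have hl' : ∀ a ∈ (List.ofFn fun j : Fin (n - 1) => (σ j : ℕ) + 1), a ≠ n := by
      intro a ha
      rcases List.mem_ofFn.1 ha with ⟨j, hj⟩
      have hlt : (σ j : ℕ) < n - 1 := (σ j).isLt
      have heq : (σ j : ℕ) + 1 = a := hj
      omega
    rw [coef_foldl n _ _ hl']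
    by_cases hc : σ = τ
    · rw [if_pos hc, if_pos (by rw [hc])]
    · rw [if_neg (fun h => hc (word_inj h.symm)), if_neg hc]
  rw [Finset.sum_congr rfl (fun σ _ => hcoe σ)] at happ
  simp only [mul_ite, mul_one, mul_zero, Finsupp.coe_zero, Pi.zero_apply] at happ
  rw [Finset.sum_ite_eq' Finset.univ τ g] at happ
  simpa using happ

theorem Vn_eq_span (n : ℕ) (hn : 2 ≤ n) :
    Vn n = Submodule.span ℤ (Set.range (cR n)) := by
  have hn1 : 1 ≤ n := by omega
  apply le_antisymm
  · intro v hv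
    obtain ⟨hvL, hvP⟩ := Submodule.mem_inf.1 hv
    have hT : v ∈ U n ⊔ (N n).toSubmodule := L_le_T n hvL
    rcases Submodule.mem_sup.1 hT with ⟨u, hu, m, hm, rfl⟩
    have hpv : pp n (u + m) = u + m := pp_eq_self (Pn_le_HM n hvP)
    rw [← hpv, map_add, pp_eq_zero_of_K hn1 (N_le_K n hm), add_zero]
    exact pp_U_mem hn1 hu
  · rw [Submodule.span_le]
    rintro r ⟨σ, rfl⟩
    refine Submodule.mem_inf.2 ⟨?_, ?_⟩
    · exact Uset_mem_L ⟨List.ofFn fun j : Fin (n - 1) => (σ j : ℕ) + 1, cR_eq n σ⟩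
    · exact HM_le_Pn n (cR_mem_HM hn1 σ)

/-- For each `n ≥ 2`, `Vₙ` is free abelian with basis the left-normed commutators
`[xₙ, x_{i₁}, …, x_{i_{n-1}}]`, `(i₁, …, i_{n-1})` a permutation of `(1, …, n-1)`. -/
theorem stmt9 (n : ℕ) (hn : 2 ≤ n) :
    ∃ b : Module.Basis (Equiv.Perm (Fin (n - 1))) ℤ (Vn n),
      ∀ σ : Equiv.Perm (Fin (n - 1)),
        (b σ : R) = (List.ofFn fun j : Fin (n - 1) => x ((σ j : ℕ) + 1)).foldl br (x n) := by
  have li := cR_li n hn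
  refine ⟨(Module.Basis.span li).map (LinearEquiv.ofEq _ _ (Vn_eq_span n hn).symm), fun σ => ?_⟩
  have h1 := Module.Basis.span_apply li σ
  rw [Module.Basis.map_apply]
  show ((LinearEquiv.ofEq _ _ (Vn_eq_span n hn).symm) (Module.Basis.span li σ) : R)
    = (List.ofFn fun j : Fin (n - 1) => x ((σ j : ℕ) + 1)).foldl br (x n)
  rw [LinearEquiv.coe_ofEq_apply]
  exact congrArg Subtype.val h1
end
end

section
/- Let H be the free abelian group on generators h_{i₁i₂i₃i₄i₅} indexed by permutations (i₁,...,i₅) of (1,...,5), and let P be the subgroup generated by all elements h_{i₁i₂i₃i₄i₅} + h_{i₂i₁i₃i₄i₅}, h_{i₁i₂i₃i₄i₅} + h_{i₁i₂i₃i₅i₄}, h_{i₁i₂i₃i₄i₅} + h_{i₂i₃i₁i₄i₅} + h_{i₃i₁i₂i₄i₅}, h_{i₁i₂i₃i₄i₅} + h_{i₁i₂i₄i₃i₅}, and h_{i₁i₂i₃i₄i₅} + h_{i₁i₄i₃i₂i₅}. Then h_{12345} ∉ P. -/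
noncomputable section

/-- `H`: the free abelian group on generators `h_{i₁i₂i₃i₄i₅}` indexed by permutations
of `{1,…,5}` (here `σ k = i_{k+1}`). -/
abbrev H : Type := Equiv.Perm (Fin 5) →₀ ℤ

/-- The generator `h_{i₁i₂i₃i₄i₅}` corresponding to a permutation. -/
def h (σ : Equiv.Perm (Fin 5)) : H := Finsupp.single σ 1

/-- The 3-cycle `(0 1 2)` on positions, used to express `h_{i₂i₃i₁i₄i₅}` as `h (σ * c)`. -/
def c : Equiv.Perm (Fin 5) := Equiv.swap 0 1 * Equiv.swap 1 2

/-- `P`: the subgroup of `H` generated by all `h_{i₁i₂i₃i₄i₅} + h_{i₂i₁i₃i₄i₅}`,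
`h_{i₁i₂i₃i₄i₅} + h_{i₁i₂i₃i₅i₄}`, `h_{i₁i₂i₃i₄i₅} + h_{i₂i₃i₁i₄i₅} + h_{i₃i₁i₂i₄i₅}`,
`h_{i₁i₂i₃i₄i₅} + h_{i₁i₂i₄i₃i₅}` and `h_{i₁i₂i₃i₄i₅} + h_{i₁i₄i₃i₂i₅}`. -/
def P : AddSubgroup H := AddSubgroup.closure
  ({y | ∃ σ, y = h σ + h (σ * Equiv.swap 0 1)} ∪
   {y | ∃ σ, y = h σ + h (σ * Equiv.swap 3 4)} ∪
   {y | ∃ σ, y = h σ + h (σ * c) + h (σ * c * c)} ∪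
   {y | ∃ σ, y = h σ + h (σ * Equiv.swap 2 3)} ∪
   {y | ∃ σ, y = h σ + h (σ * Equiv.swap 1 3)})

/-- The sign homomorphism `μ : H →+ ℤ/3`, sending `h σ` to `sgn σ` mod 3. -/
def μ : H →+ ZMod 3 :=
  (Int.castAddHom (ZMod 3)).comp
    (Finsupp.liftAddHom fun σ => AddMonoidHom.mulRight ((Equiv.Perm.sign σ : ℤ)))

lemma μ_h (σ : Equiv.Perm (Fin 5)) : μ (h σ) = ((Equiv.Perm.sign σ : ℤ) : ZMod 3) := by
  simp [μ, h]

lemma sign_c : Equiv.Perm.sign c = 1 := by decide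

lemma μ_swap (σ : Equiv.Perm (Fin 5)) (i j : Fin 5) (hij : i ≠ j) :
    μ (h σ + h (σ * Equiv.swap i j)) = 0 := by
  rw [map_add, μ_h, μ_h, map_mul, Equiv.Perm.sign_swap hij]
  rcases Int.units_eq_one_or (Equiv.Perm.sign σ) with hs | hs <;> simp [hs]

/-- `h_{12345} ∉ P`. -/
theorem stmt12 : h 1 ∉ P := by
  intro hp
  have hP : P ≤ μ.ker := by
    rw [P, AddSubgroup.closure_le]
    rintro y ((((⟨σ, rfl⟩ | ⟨σ, rfl⟩) | ⟨σ, rfl⟩) | ⟨σ, rfl⟩) | ⟨σ, rfl⟩) <;>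
      rw [SetLike.mem_coe, AddMonoidHom.mem_ker]
    · exact μ_swap σ 0 1 (by decide)
    · exact μ_swap σ 3 4 (by decide)
    · rw [map_add, map_add, μ_h, μ_h, μ_h, map_mul, map_mul, map_mul, sign_c]
      rcases Int.units_eq_one_or (Equiv.Perm.sign σ) with hs | hs <;> simp [hs] <;> decide
    · exact μ_swap σ 2 3 (by decide)
    · exact μ_swap σ 1 3 (by decide)
  have := hP hp
  rw [AddMonoidHom.mem_ker] at this
  simp [μ_h] at this
end
end
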